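/- arXiv:2112.10956 — 2 statements merged into one kernel-verified Lean document; each statement's English description precedes it below -/
import Mathlib

section
/- Let n ≥ 1, s ∈ ℕ, x₀ ∈ ℝⁿ and r > 0. If a ∈ L¹(ℝⁿ; ℂ) is supported in the closed ball B(x₀, r) and satisfies the vanishing moment conditions ∫_{ℝⁿ} a(ξ) ξ^α dξ = 0 for every multi-index α with |α| ≤ s, then for every x ∈ ℝⁿ one has |â(x)| ≤ min{1, (2π r |x|)^{s+1}/(s+1)!} · ‖a‖_{L¹}. -/
open MeasureTheory Real Filter Topology Function
open scoped ENNReal FourierTransform NNReal RealInnerProductSpace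

lemma exp_I_taylor_bound_nonneg : ∀ m : ℕ, ∀ u : ℝ, 0 ≤ u →
      ‖Complex.exp (u * Complex.I) - ∑ k ∈ Finset.range m, (u * Complex.I) ^ k / k.factorial‖
        ≤ u ^ m / m.factorial := by
    intro m
    induction m with
    | zero => intro u hu; simp [Complex.norm_exp_ofReal_mul_I]
    | succ m ih =>
      intro u hu
      set F : ℝ → ℂ := fun t =>
        Complex.exp (t * Complex.I) - ∑ k ∈ Finset.range (m+1), (t * Complex.I) ^ k / k.factorial
        with hF
      set F' : ℝ → ℂ := fun t =>
        Complex.I * (Complex.exp (t * Complex.I)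
          - ∑ k ∈ Finset.range m, (t * Complex.I) ^ k / k.factorial) with hF'
      have hd : ∀ t : ℝ, HasDerivAt F (F' t) t := by
        intro t
        have h1 : HasDerivAt (fun t : ℝ => (t : ℂ) * Complex.I) Complex.I t := by
          simpa using (Complex.ofRealCLM.hasDerivAt (x := t)).mul_const Complex.I
        have h2 : HasDerivAt (fun t : ℝ => Complex.exp (t * Complex.I))
            (Complex.exp (t * Complex.I) * Complex.I) t := h1.cexp
        have h3 : ∀ k : ℕ, HasDerivAt (fun t : ℝ => ((t : ℂ) * Complex.I) ^ k / k.factorial)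
            ((k * ((t : ℂ) * Complex.I) ^ (k - 1) * Complex.I) / k.factorial) t :=
          fun k => (HasDerivAt.comp t (hasDerivAt_pow k ((t:ℂ) * Complex.I)) h1).div_const _
        have h4 : HasDerivAt (fun t : ℝ =>
            ∑ k ∈ Finset.range (m+1), ((t : ℂ) * Complex.I) ^ k / k.factorial)
            (∑ k ∈ Finset.range (m+1),
              (k * ((t : ℂ) * Complex.I) ^ (k - 1) * Complex.I) / k.factorial) t :=
          HasDerivAt.fun_sum fun k _ => h3 k
        have hsum : (∑ k ∈ Finset.range (m+1),
            (k * ((t : ℂ) * Complex.I) ^ (k - 1) * Complex.I) / k.factorial)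
            = Complex.I * ∑ k ∈ Finset.range m, ((t : ℂ) * Complex.I) ^ k / k.factorial := by
          rw [Finset.sum_range_succ']
          simp only [Nat.factorial_succ, Nat.add_sub_cancel, Finset.mul_sum]
          rw [Nat.cast_zero]
          simp only [zero_mul, zero_div, add_zero]
          refine Finset.sum_congr rfl fun k _ => ?_
          have hk : ((k:ℂ) + 1) ≠ 0 := Nat.cast_add_one_ne_zero k
          have hfk : (k.factorial : ℂ) ≠ 0 := by exact_mod_cast k.factorial_ne_zero
          push_cast
          field_simp
        have := h2.sub h4
        rw [hsum] at this
        convert this using 1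
        · rfl
        · rfl
        ring
      have hF0 : F 0 = 0 := by
        simp [hF, Finset.sum_range_succ']
      have hcont : Continuous F' := by
        rw [hF']; fun_prop
      have hFTC : F u = ∫ t in (0:ℝ)..u, F' t := by
        rw [intervalIntegral.integral_eq_sub_of_hasDerivAt (fun t _ => hd t)
          (hcont.intervalIntegrable 0 u), hF0, sub_zero]
      show ‖F u‖ ≤ _
      rw [hFTC]
      have hmono : ∀ᵐ t ∂MeasureTheory.volume.restrict (Set.uIoc (0:ℝ) u),
          ‖F' t‖ ≤ t ^ m / m.factorial := by
        refine MeasureTheory.ae_restrict_of_forall_mem measurableSet_uIoc fun t ht => ?_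
        rw [Set.uIoc_of_le hu] at ht
        have ht0 : 0 ≤ t := le_of_lt ht.1
        rw [hF', norm_mul, Complex.norm_I, one_mul]
        exact ih t ht0
      have hgint : IntervalIntegrable (fun t : ℝ => t ^ m / m.factorial)
          MeasureTheory.volume 0 u := (by fun_prop : Continuous fun t : ℝ => t ^ m / (m.factorial:ℝ)).intervalIntegrable 0 u
      calc ‖∫ t in (0:ℝ)..u, F' t‖ ≤ |∫ t in (0:ℝ)..u, t ^ m / m.factorial| :=
            intervalIntegral.norm_integral_le_abs_of_norm_le hmono hgint
        _ = u ^ (m+1) / (m+1).factorial := by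
            rw [intervalIntegral.integral_div, integral_pow]
            simp only [ne_eq, zero_pow, Nat.succ_ne_zero, not_false_eq_true, sub_zero]
            rw [abs_of_nonneg (by positivity), Nat.factorial_succ]
            have : ((m:ℝ) + 1) ≠ 0 := by positivity
            have h2 : ((m.factorial : ℝ)) ≠ 0 := by exact_mod_cast m.factorial_ne_zero
            push_cast
            field_simp

lemma exp_I_taylor_bound (m : ℕ) (u : ℝ) :
    ‖Complex.exp (u * Complex.I) - ∑ k ∈ Finset.range m, (u * Complex.I) ^ k / k.factorial‖
      ≤ |u| ^ m / m.factorial := by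
  rcases le_or_gt 0 u with hu | hu
  · rw [abs_of_nonneg hu]; exact exp_I_taylor_bound_nonneg m u hu
  · have h := exp_I_taylor_bound_nonneg m (-u) (by linarith)
    rw [abs_of_neg hu]
    have hconj : Complex.exp ((-u : ℝ) * Complex.I)
        - ∑ k ∈ Finset.range m, ((-u : ℝ) * Complex.I) ^ k / k.factorial
        = (starRingEnd ℂ) (Complex.exp (u * Complex.I)
          - ∑ k ∈ Finset.range m, (u * Complex.I) ^ k / k.factorial) := by
      rw [map_sub, map_sum, ← Complex.exp_conj]
      push_cast
      simp [map_div₀, map_pow, map_mul, Complex.conj_I, Complex.conj_ofReal, neg_mul, mul_neg]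
    rw [hconj, RCLike.norm_conj] at h
    exact h

private lemma integrable_cont_mul {n : ℕ} {x₀ : EuclideanSpace ℝ (Fin n)} {r : ℝ}
    {a : EuclideanSpace ℝ (Fin n) → ℂ} (ha : Integrable a)
    (hsupp : Function.support a ⊆ Metric.closedBall x₀ r)
    (g : EuclideanSpace ℝ (Fin n) → ℂ) (hg : Continuous g) :
    Integrable (fun ξ => g ξ * a ξ) := by
  obtain ⟨C, hC⟩ := (isCompact_closedBall x₀ r).exists_bound_of_continuousOn hg.continuousOn
  refine (ha.norm.const_mul (max C 0)).mono' (hg.aestronglyMeasurable.mul ha.1) ?_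
  filter_upwards with ξ
  rw [norm_mul]
  by_cases hξ : a ξ = 0
  · simp [hξ]
  · refine mul_le_mul_of_nonneg_right ?_ (norm_nonneg _)
    exact (hC ξ (hsupp hξ)).trans (le_max_left _ _)

private lemma prod_eq_prod_pow {n j : ℕ} (p : Fin j → Fin n) (g : Fin n → ℂ) :
    ∏ t, g (p t) = ∏ i, g i ^ (Finset.univ.filter fun t => p t = i).card := by
  rw [Finset.prod_comp]
  refine Finset.prod_subset (Finset.subset_univ _) fun b _ hb => ?_
  have hemp : (Finset.univ.filter fun t => p t = b) = ∅ := by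
    ext t
    simp only [Finset.mem_filter, Finset.mem_univ, true_and, Finset.notMem_empty, iff_false]
    intro h
    exact hb (h ▸ Finset.mem_image_of_mem p (Finset.mem_univ t))
  rw [hemp, Finset.card_empty, pow_zero]

private lemma sum_card_fiber {n j : ℕ} (p : Fin j → Fin n) :
    ∑ i, (Finset.univ.filter fun t => p t = i).card = j := by
  have := Finset.card_eq_sum_card_fiberwise (f := p) (s := Finset.univ) (t := Finset.univ)
    (fun t _ => Finset.mem_univ (p t))
  simpa using this.symm

theorem fourier_atom_taylor_bound {n : ℕ} (hn : 1 ≤ n) (s : ℕ)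
    (x₀ : EuclideanSpace ℝ (Fin n)) (r : ℝ) (hr : 0 < r)
    (a : EuclideanSpace ℝ (Fin n) → ℂ) (ha : Integrable a)
    (hsupp : Function.support a ⊆ Metric.closedBall x₀ r)
    (hmom : ∀ α : Fin n → ℕ, (∑ i, α i) ≤ s →
      ∫ ξ : EuclideanSpace ℝ (Fin n), ((∏ i, (ξ i) ^ (α i) : ℝ) : ℂ) * a ξ = 0) :
    ∀ x : EuclideanSpace ℝ (Fin n),
      ‖𝓕 a x‖ ≤ min 1 ((2 * π * r * ‖x‖) ^ (s + 1) / (Nat.factorial (s + 1))) *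
        ∫ ξ, ‖a ξ‖ := by
  intro x
  set c : ℝ := ⟪x₀, x⟫ with hc
  -- continuity facts
  have hcont_coord : ∀ i : Fin n, Continuous fun ξ : EuclideanSpace ℝ (Fin n) => ξ i :=
    fun i => (EuclideanSpace.proj i).continuous
  have hcont_inner : Continuous fun ξ : EuclideanSpace ℝ (Fin n) => (⟪ξ, x⟫ : ℝ) :=
    continuous_id.inner continuous_const
  -- vanishing of inner-power moments
  have hmon : ∀ j, j ≤ s → ∫ ξ, ((⟪ξ, x⟫ : ℝ) : ℂ) ^ j * a ξ = 0 := by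
    intro j hj
    have hrw : ∀ ξ : EuclideanSpace ℝ (Fin n),
        ((⟪ξ, x⟫ : ℝ) : ℂ) ^ j * a ξ
        = ∑ p : Fin j → Fin n, (∏ t, (x (p t) : ℂ)) *
            (((∏ i, (ξ i) ^ (Finset.univ.filter fun t => p t = i).card : ℝ) : ℂ) * a ξ) := by
      intro ξ
      have h1 : ((⟪ξ, x⟫ : ℝ) : ℂ) = ∑ i, (ξ i : ℂ) * (x i : ℂ) := by
        rw [PiLp.inner_apply]
        simp only [RCLike.inner_apply, conj_trivial]
        push_cast
        exact Finset.sum_congr rfl fun _ _ => mul_comm _ _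
      rw [h1, Fintype.sum_pow, Finset.sum_mul]
      refine Finset.sum_congr rfl fun p _ => ?_
      rw [Finset.prod_mul_distrib, prod_eq_prod_pow p (fun i => (ξ i : ℂ))]
      push_cast
      ring
    simp_rw [hrw]
    rw [integral_finset_sum]
    · refine Finset.sum_eq_zero fun p _ => ?_
      rw [integral_const_mul, hmom _ (by rw [sum_card_fiber p]; exact hj), mul_zero]
    · intro p _
      exact (integrable_cont_mul ha hsupp _ (Complex.continuous_ofReal.comp
        (continuous_finset_prod _ fun i _ => (hcont_coord i).pow _))).const_mul _
  -- vanishing of centered inner-power moments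
  have hzero : ∀ k, k ≤ s → ∫ ξ, ((⟪ξ, x⟫ - c : ℝ) : ℂ) ^ k * a ξ = 0 := by
    intro k hk
    have hrw : ∀ ξ : EuclideanSpace ℝ (Fin n),
        ((⟪ξ, x⟫ - c : ℝ) : ℂ) ^ k * a ξ
        = ∑ j ∈ Finset.range (k+1),
            ((-(c:ℂ)) ^ (k - j) * (k.choose j : ℂ)) * (((⟪ξ, x⟫ : ℝ) : ℂ) ^ j * a ξ) := by
      intro ξ
      have h1 : ((⟪ξ, x⟫ - c : ℝ) : ℂ) = ((⟪ξ, x⟫ : ℝ) : ℂ) + (-(c:ℂ)) := by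
        push_cast; ring
      rw [h1, add_pow, Finset.sum_mul]
      exact Finset.sum_congr rfl fun i _ => by ring
    simp_rw [hrw]
    rw [integral_finset_sum]
    · refine Finset.sum_eq_zero fun j hj => ?_
      rw [integral_const_mul, hmon j ((Nat.lt_succ_iff.mp (Finset.mem_range.mp hj)).trans hk), mul_zero]
    · intro j _
      exact (integrable_cont_mul ha hsupp _
        ((Complex.continuous_ofReal.comp hcont_inner).pow _)).const_mul _
    -- the Taylor polynomial part integrates to zero
  set e0 : ℂ := Complex.exp ((-2 * π * c : ℝ) * Complex.I) with he0
  set T : EuclideanSpace ℝ (Fin n) → ℂ := fun ξ =>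
    e0 * ∑ k ∈ Finset.range (s+1),
      ((-2 * π * (⟪ξ, x⟫ - c) : ℝ) * Complex.I) ^ k / k.factorial with hT
  set E : EuclideanSpace ℝ (Fin n) → ℂ := fun ξ =>
    Complex.exp ((-2 * π * ⟪ξ, x⟫ : ℝ) * Complex.I) with hE
  have hcontT : Continuous T := by
    refine continuous_const.mul (continuous_finset_sum _ fun k _ => Continuous.div_const ?_ _)
    exact ((Complex.continuous_ofReal.comp
      ((continuous_const.mul (hcont_inner.sub continuous_const)))).mul continuous_const).pow _
  have hcontE : Continuous E := by
    exact Complex.continuous_exp.comp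
      ((Complex.continuous_ofReal.comp (continuous_const.mul hcont_inner)).mul continuous_const)
  have hTa : Integrable (fun ξ => T ξ * a ξ) := integrable_cont_mul ha hsupp T hcontT
  have hEa : Integrable (fun ξ => E ξ * a ξ) := integrable_cont_mul ha hsupp E hcontE
  have hT0 : ∫ ξ, T ξ * a ξ = 0 := by
    have hrw : ∀ ξ : EuclideanSpace ℝ (Fin n), T ξ * a ξ
        = ∑ k ∈ Finset.range (s+1),
            (e0 * (((-2 * π : ℝ) : ℂ) * Complex.I) ^ k / k.factorial) *
              (((⟪ξ, x⟫ - c : ℝ) : ℂ) ^ k * a ξ) := by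
      intro ξ
      rw [hT]
      simp only
      rw [Finset.mul_sum, Finset.sum_mul]
      refine Finset.sum_congr rfl fun k _ => ?_
      have h2 : ((-2 * π * (⟪ξ, x⟫ - c) : ℝ) : ℂ) * Complex.I
          = (((-2 * π : ℝ) : ℂ) * Complex.I) * ((⟪ξ, x⟫ - c : ℝ) : ℂ) := by
        push_cast; ring
      rw [h2, mul_pow]
      ring
    simp_rw [hrw]
    rw [integral_finset_sum]
    · refine Finset.sum_eq_zero fun k hk => ?_
      rw [integral_const_mul, hzero k (Nat.lt_succ_iff.mp (Finset.mem_range.mp hk)), mul_zero]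
    · intro k _
      exact (integrable_cont_mul ha hsupp _
        ((Complex.continuous_ofReal.comp (hcont_inner.sub continuous_const)).pow _)).const_mul _
  -- rewrite the Fourier integral
  have h𝓕 : 𝓕 a x = ∫ ξ, (E ξ - T ξ) * a ξ := by
    rw [Real.fourier_eq']
    simp_rw [smul_eq_mul, sub_mul]
    rw [integral_sub hEa hTa, hT0, sub_zero]
  -- pointwise bound
  set K : ℝ := (2 * π * r * ‖x‖) ^ (s + 1) / ((s+1).factorial : ℝ) with hK
  have hK0 : 0 ≤ K := by
    have : (0:ℝ) ≤ 2 * π * r * ‖x‖ := by positivity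
    positivity
  have hptw : ∀ ξ, ‖(E ξ - T ξ) * a ξ‖ ≤ K * ‖a ξ‖ := by
    intro ξ
    by_cases hξ : a ξ = 0
    · simp [hξ, hK0]
    · have hmem : ξ ∈ Metric.closedBall x₀ r := hsupp hξ
      set u : ℝ := -2 * π * (⟪ξ, x⟫ - c) with hu
      have hsplit : E ξ - T ξ = e0 * (Complex.exp ((u : ℝ) * Complex.I)
          - ∑ k ∈ Finset.range (s+1), ((u : ℝ) * Complex.I) ^ k / k.factorial) := by
        rw [hE, hT, he0]
        simp only
        have h5 : ((-2 * π * ⟪ξ, x⟫ : ℝ) : ℂ) * Complex.I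
            = ((-2 * π * c : ℝ) : ℂ) * Complex.I + ((u : ℝ) : ℂ) * Complex.I := by
          rw [hu]; push_cast; ring
        rw [h5, Complex.exp_add, hu]
        ring
      have hnorm : ‖E ξ - T ξ‖ ≤ |u| ^ (s+1) / ((s+1).factorial : ℝ) := by
        rw [hsplit, norm_mul, he0, Complex.norm_exp_ofReal_mul_I, one_mul]
        exact exp_I_taylor_bound (s+1) u
      have huabs : |u| ≤ 2 * π * r * ‖x‖ := by
        have h1 : ⟪ξ, x⟫ - c = ⟪ξ - x₀, x⟫ := by
          rw [hc, inner_sub_left]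
        have h2 : |⟪ξ - x₀, x⟫| ≤ ‖ξ - x₀‖ * ‖x‖ := abs_real_inner_le_norm _ _
        have h3 : ‖ξ - x₀‖ ≤ r := by
          rw [← dist_eq_norm]
          exact Metric.mem_closedBall.mp hmem
        have h4 : |u| = 2 * π * |⟪ξ, x⟫ - c| := by
          rw [hu, abs_mul, abs_mul]
          simp [abs_of_nonneg Real.pi_pos.le]
        rw [h4, h1]
        calc 2 * π * |⟪ξ - x₀, x⟫| ≤ 2 * π * (‖ξ - x₀‖ * ‖x‖) := by
              have : (0:ℝ) ≤ 2 * π := by positivity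
              exact mul_le_mul_of_nonneg_left h2 this
          _ ≤ 2 * π * (r * ‖x‖) := by
              have : (0:ℝ) ≤ 2 * π := by positivity
              refine mul_le_mul_of_nonneg_left ?_ this
              exact mul_le_mul_of_nonneg_right h3 (norm_nonneg _)
          _ = 2 * π * r * ‖x‖ := by ring
      have hET : ‖E ξ - T ξ‖ ≤ K := by
        refine hnorm.trans ?_
        rw [hK]
        have hfac : (0:ℝ) < ((s+1).factorial : ℝ) := by exact_mod_cast (s+1).factorial_pos
        exact (div_le_div_iff_of_pos_right hfac).mpr (pow_le_pow_left₀ (abs_nonneg u) huabs (s+1))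
      rw [norm_mul]
      exact mul_le_mul_of_nonneg_right hET (norm_nonneg _)
  -- integrate
  have hint : Integrable (fun ξ => (E ξ - T ξ) * a ξ) := by
    have : (fun ξ => (E ξ - T ξ) * a ξ) = fun ξ => E ξ * a ξ - T ξ * a ξ := by
      funext ξ; ring
    rw [this]
    exact hEa.sub hTa
  have bound2 : ‖𝓕 a x‖ ≤ K * ∫ ξ, ‖a ξ‖ := by
    rw [h𝓕]
    calc ‖∫ ξ, (E ξ - T ξ) * a ξ‖ ≤ ∫ ξ, ‖(E ξ - T ξ) * a ξ‖ :=
          norm_integral_le_integral_norm _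
      _ ≤ ∫ ξ, K * ‖a ξ‖ := integral_mono hint.norm (ha.norm.const_mul K) hptw
      _ = K * ∫ ξ, ‖a ξ‖ := integral_const_mul K _
  have bound1 : ‖𝓕 a x‖ ≤ ∫ ξ, ‖a ξ‖ :=
    VectorFourier.norm_fourierIntegral_le_integral_norm _ _ _ a x
  have hI : 0 ≤ ∫ ξ, ‖a ξ‖ := integral_nonneg fun _ => norm_nonneg _
  rw [min_mul_of_nonneg _ _ hI]
  refine le_min (by simpa using bound1) ?_
  simpa [hK] using bound2
end

section
/- Let n ≥ 1, let p : ℝⁿ → (0,1] be measurable with 0 < p₋ := essinf p ≤ p₊ := esssup p ≤ 1, let q ∈ (1,∞] and let s ∈ ℕ with s ≥ ⌊n(1/p₋ − 1)⌋. Then there exists a constant C > 0, depending only on n, p₋, p₊, q, s, such that for every Euclidean ball B ⊂ ℝⁿ, every (p(·),q,s)-atom a on B, and every x ∈ ℝⁿ, one has |â(x)| ≤ C max{ |x|^{n(1/p₋ − 1)}, |x|^{n(1/p₊ − 1)} }. -/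
open MeasureTheory Real Filter Topology Function
open scoped ENNReal FourierTransform NNReal

/-- The Luxemburg quasi-norm for a variable exponent `p`, applied to an
`ℝ≥0∞`-valued function `f` (for a complex-valued `g` one takes `f = fun x => ‖g x‖₊`).
The infimum of the empty set is `∞`. -/
noncomputable def luxNorm {α : Type*} [MeasurableSpace α] (μ : Measure α)
    (p : α → ℝ) (f : α → ℝ≥0∞) : ℝ≥0∞ :=
  sInf {c : ℝ≥0∞ | c ≠ 0 ∧ c ≠ ∞ ∧ ∫⁻ x, (f x / c) ^ p x ∂μ ≤ 1}

/-- A `(p(·),q,s)`-atom supported on the closed Euclidean ball `B(c,r)`: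
it belongs to `L^q`, is supported in the ball, satisfies the size condition
`‖a‖_{L^q} ≤ |B|^{1/q} / ‖χ_B‖_{L^{p(·)}}`, and has vanishing moments up to order `s`. -/
def IsVarAtom {n : ℕ} (p : EuclideanSpace ℝ (Fin n) → ℝ) (q : ℝ≥0∞) (s : ℕ)
    (c : EuclideanSpace ℝ (Fin n)) (r : ℝ) (a : EuclideanSpace ℝ (Fin n) → ℂ) : Prop :=
  MeasureTheory.MemLp a q volume ∧
  Function.support a ⊆ Metric.closedBall c r ∧
  MeasureTheory.eLpNorm a q volume ≤
    (volume (Metric.closedBall c r)) ^ (q⁻¹).toReal /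
      luxNorm volume p ((Metric.closedBall c r).indicator fun _ => (1 : ℝ≥0∞)) ∧
  ∀ α : Fin n → ℕ, (∑ i, α i) ≤ s →
    ∫ ξ : EuclideanSpace ℝ (Fin n), ((∏ i, (ξ i) ^ (α i) : ℝ) : ℂ) * a ξ = 0

open Finset Complex
open scoped RealInnerProductSpace

section Aux

variable {n : ℕ} {c : EuclideanSpace ℝ (Fin n)} {r : ℝ} {a : EuclideanSpace ℝ (Fin n) → ℂ}

lemma deriv_aux (m : ℕ) (z : ℂ) :
    HasDerivAt (fun z : ℂ => Complex.exp (z * I) - ∑ k ∈ Finset.range (m+1), (z*I)^k / (Nat.factorial k))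
      (Complex.I * (Complex.exp (z * I) - ∑ k ∈ Finset.range m, (z*I)^k / (Nat.factorial k))) z := by
  have e1 : HasDerivAt (fun z : ℂ => z * I) I z := by
    simpa using (hasDerivAt_id z).mul_const I
  have e2 : HasDerivAt (fun z : ℂ => Complex.exp (z * I)) (Complex.exp (z*I) * I) z := by
    simpa using e1.cexp
  have e4 : HasDerivAt (fun z : ℂ => ∑ k ∈ Finset.range (m+1), (z*I)^k / (Nat.factorial k))
      (∑ k ∈ Finset.range (m+1), ((k : ℂ) * (z*I)^(k-1) * I) / (Nat.factorial k)) z :=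
    HasDerivAt.fun_sum fun k _ => ((e1.pow k).div_const _)
  have key : (∑ k ∈ Finset.range (m+1), ((k : ℂ) * (z*I)^(k-1) * I) / (Nat.factorial k))
      = Complex.I * ∑ k ∈ Finset.range m, (z*I)^k / (Nat.factorial k) := by
    rw [Finset.sum_range_succ', Finset.mul_sum]
    simp only [Nat.cast_zero, zero_mul, Nat.factorial_zero, Nat.cast_one, zero_div, add_zero,
      Nat.cast_add, Nat.cast_one, Nat.add_sub_cancel, Nat.factorial_succ]
    refine Finset.sum_congr rfl fun k _ => ?_
    have hk : ((k:ℂ) + 1) ≠ 0 := by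
      have := Nat.cast_ne_zero (R := ℂ).2 (Nat.succ_ne_zero k); push_cast at this ⊢; exact this
    have hf : ((Nat.factorial k : ℂ)) ≠ 0 := Nat.cast_ne_zero.2 (Nat.factorial_ne_zero k)
    field_simp [hk, hf]
    push_cast
    ring
  have := e2.fun_sub e4
  rw [key] at this
  exact this.congr_deriv (by ring)

lemma exp_taylor_bound (m : ℕ) (t : ℝ) :
    ‖Complex.exp (t * Complex.I) - ∑ k ∈ Finset.range m, ((t:ℂ) * Complex.I) ^ k / (Nat.factorial k)‖
      ≤ |t| ^ m := by
  induction m generalizing t with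
  | zero => simp [Complex.norm_exp_ofReal_mul_I]
  | succ m ih =>
    set F : ℝ → ℂ := fun y : ℝ =>
      Complex.exp (y * Complex.I) - ∑ k ∈ Finset.range (m+1), ((y:ℂ)*Complex.I)^k / (Nat.factorial k) with hF
    have hder : ∀ y ∈ Set.uIcc (0:ℝ) t,
        HasDerivWithinAt F
          (Complex.I * (Complex.exp (y * Complex.I) - ∑ k ∈ Finset.range m, ((y:ℂ)*Complex.I)^k / (Nat.factorial k)))
          (Set.uIcc (0:ℝ) t) y :=
      fun y _ => ((deriv_aux m (y:ℂ)).comp_ofReal).hasDerivWithinAt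
    have hbound : ∀ y ∈ Set.uIcc (0:ℝ) t,
        ‖Complex.I * (Complex.exp (y * Complex.I) - ∑ k ∈ Finset.range m, ((y:ℂ)*Complex.I)^k / (Nat.factorial k))‖
          ≤ |t| ^ m := by
      intro y hy
      rw [norm_mul, Complex.norm_I, one_mul]
      refine (ih y).trans ?_
      have hyt : |y| ≤ |t| := by
        rcases Set.mem_uIcc.mp hy with ⟨h1, h2⟩ | ⟨h1, h2⟩
        · rw [_root_.abs_of_nonneg h1]; exact h2.trans (le_abs_self t)
        · rw [_root_.abs_of_nonpos h2]; exact (neg_le_neg h1).trans (neg_le_abs t)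
      exact pow_le_pow_left₀ (abs_nonneg y) hyt m
    have hmv := (convex_uIcc (0:ℝ) t).norm_image_sub_le_of_norm_hasDerivWithin_le hder hbound
      Set.left_mem_uIcc Set.right_mem_uIcc
    have hF0 : F 0 = 0 := by
      simp only [hF, Complex.ofReal_zero, zero_mul, Complex.exp_zero]
      rw [Finset.sum_eq_single 0]
      · simp
      · intro k _ hk; simp [zero_pow hk]
      · simp
    rw [hF0, sub_zero] at hmv
    calc ‖F t‖ ≤ |t| ^ m * ‖t - 0‖ := hmv
    _ = |t| ^ (m+1) := by rw [sub_zero, Real.norm_eq_abs, pow_succ]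

lemma lux_lower {α : Type*} [MeasurableSpace α] (μ : Measure α)
    (p : α → ℝ) (hpos : ∀ x, 0 < p x) (hp1 : ∀ x, p x ≤ 1)
    (h0 : 0 < essInf p μ) (hμ : μ ≠ 0) {A : Set α} (hA : MeasurableSet A)
    (hA0 : μ A ≠ 0) (hAtop : μ A ≠ ∞) :
    min ((μ A) ^ (essInf p μ)⁻¹) ((μ A) ^ (essSup p μ)⁻¹)
      ≤ luxNorm μ p (A.indicator fun _ => (1 : ℝ≥0∞)) := by
  set Pm := essInf p μ with hPm
  set Pp := essSup p μ with hPp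
  have hbdd_above : IsBoundedUnder (· ≤ ·) (ae μ) p :=
    Filter.isBoundedUnder_of ⟨1, hp1⟩
  have hbdd_below : IsBoundedUnder (· ≥ ·) (ae μ) p :=
    Filter.isBoundedUnder_of ⟨0, fun x => (hpos x).le⟩
  have hPmPp : Pm ≤ Pp := by
    have : (ae μ).NeBot := ae_neBot.2 hμ
    obtain ⟨x, hx1, hx2⟩ := ((ae_essInf_le hbdd_below).and (ae_le_essSup hbdd_above)).exists
    exact hx1.trans hx2
  have hPp_pos : 0 < Pp := lt_of_lt_of_le h0 hPmPp
  refine le_sInf fun C hC => ?_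
  obtain ⟨hC0, hCtop, hint⟩ := hC
  have hrw : (fun x => (A.indicator (fun _ => (1:ℝ≥0∞)) x / C) ^ p x)
      = A.indicator (fun x => (C⁻¹ : ℝ≥0∞) ^ p x) := by
    funext x
    by_cases hx : x ∈ A
    · simp [Set.indicator_of_mem hx, one_div]
    · simp [Set.indicator_of_notMem hx, ENNReal.zero_rpow_of_pos (hpos x)]
  rw [hrw, lintegral_indicator hA] at hint
  set b : ℝ≥0∞ := C⁻¹ with hb
  have hb0 : b ≠ 0 := ENNReal.inv_ne_zero.2 hCtop
  have hbtop : b ≠ ∞ := ENNReal.inv_ne_top.2 hC0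
  rcases le_total C 1 with hC1 | hC1
  · -- C ≤ 1, use Pm
    have hb1 : 1 ≤ b := ENNReal.one_le_inv.2 hC1
    have hae : ∀ᵐ x ∂μ, b ^ Pm ≤ b ^ p x := by
      filter_upwards [ae_essInf_le hbdd_below] with x hx
      exact ENNReal.rpow_le_rpow_of_exponent_le hb1 hx
    have hle : b ^ Pm * μ A ≤ 1 := by
      calc b ^ Pm * μ A = ∫⁻ _ in A, b ^ Pm ∂μ := by
            rw [setLIntegral_const]
      _ ≤ ∫⁻ x in A, b ^ p x ∂μ := lintegral_mono_ae (ae_restrict_of_ae hae)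
      _ ≤ 1 := hint
    have hvle : μ A ≤ C ^ Pm := by
      have : μ A ≤ (b ^ Pm)⁻¹ := by
        rw [ENNReal.le_inv_iff_mul_le]; rw [mul_comm] at hle; exact hle
      rwa [hb, ENNReal.inv_rpow, inv_inv] at this
    have : (μ A) ^ Pm⁻¹ ≤ C := by
      have := ENNReal.rpow_le_rpow hvle (inv_nonneg.2 h0.le)
      rwa [← ENNReal.rpow_mul, mul_inv_cancel₀ h0.ne', ENNReal.rpow_one] at this
    exact le_trans (min_le_left _ _) this
  · -- 1 ≤ C, use Pp
    have hb1 : b ≤ 1 := ENNReal.inv_le_one.2 hC1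
    have hae : ∀ᵐ x ∂μ, b ^ Pp ≤ b ^ p x := by
      filter_upwards [ae_le_essSup hbdd_above] with x hx
      exact ENNReal.rpow_le_rpow_of_exponent_ge hb1 hx
    have hle : b ^ Pp * μ A ≤ 1 := by
      calc b ^ Pp * μ A = ∫⁻ _ in A, b ^ Pp ∂μ := by
            rw [setLIntegral_const]
      _ ≤ ∫⁻ x in A, b ^ p x ∂μ := lintegral_mono_ae (ae_restrict_of_ae hae)
      _ ≤ 1 := hint
    have hvle : μ A ≤ C ^ Pp := by
      have : μ A ≤ (b ^ Pp)⁻¹ := by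
        rw [ENNReal.le_inv_iff_mul_le]; rw [mul_comm] at hle; exact hle
      rwa [hb, ENNReal.inv_rpow, inv_inv] at this
    have : (μ A) ^ Pp⁻¹ ≤ C := by
      have := ENNReal.rpow_le_rpow hvle (inv_nonneg.2 hPp_pos.le)
      rwa [← ENNReal.rpow_mul, mul_inv_cancel₀ hPp_pos.ne', ENNReal.rpow_one] at this
    exact le_trans (min_le_right _ _) this

lemma mul_int (ha : Integrable a volume) (hsupp : support a ⊆ Metric.closedBall c r)
    {F : EuclideanSpace ℝ (Fin n) → ℂ} (hF : Continuous F) :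
    Integrable (fun ξ => F ξ * a ξ) volume := by
  set B := Metric.closedBall c r
  obtain ⟨M, hM⟩ := (isCompact_closedBall c r).exists_bound_of_continuousOn hF.continuousOn
  have heq : (fun ξ => F ξ * a ξ) = fun ξ => B.indicator F ξ * a ξ := by
    funext ξ
    by_cases hξ : ξ ∈ B
    · rw [Set.indicator_of_mem hξ]
    · rw [Set.indicator_of_notMem hξ]
      rw [notMem_support.1 fun h => hξ (hsupp h), mul_zero, mul_zero]
  rw [heq]
  refine Integrable.bdd_mul (c := max M 0) ha ?_ (Filter.Eventually.of_forall fun ξ => ?_)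
  · exact (hF.stronglyMeasurable.indicator measurableSet_closedBall).aestronglyMeasurable
  · by_cases hξ : ξ ∈ B
    · rw [Set.indicator_of_mem hξ]; exact (hM ξ hξ).trans (le_max_left _ _)
    · rw [Set.indicator_of_notMem hξ]; simp

lemma int_bound (ha : Integrable a volume) (hsupp : support a ⊆ Metric.closedBall c r)
    {F : EuclideanSpace ℝ (Fin n) → ℂ} {M : ℝ}
    (hM : ∀ ξ ∈ Metric.closedBall c r, ‖F ξ‖ ≤ M) :
    ‖∫ ξ, F ξ * a ξ‖ ≤ M * ∫ ξ, ‖a ξ‖ := by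
  refine (norm_integral_le_integral_norm _).trans ?_
  have h1 : ∀ ξ, ‖F ξ * a ξ‖ ≤ M * ‖a ξ‖ := by
    intro ξ
    by_cases hξ : ξ ∈ Metric.closedBall c r
    · rw [norm_mul]
      exact mul_le_mul_of_nonneg_right (hM ξ hξ) (norm_nonneg _)
    · rw [notMem_support.1 fun h => hξ (hsupp h)]
      simp
  calc ∫ ξ, ‖F ξ * a ξ‖ ≤ ∫ ξ, M * ‖a ξ‖ := by
        refine integral_mono_of_nonneg (Filter.Eventually.of_forall fun ξ => norm_nonneg _)
          (ha.norm.const_mul M) (Filter.Eventually.of_forall h1)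
  _ = M * ∫ ξ, ‖a ξ‖ := integral_const_mul M _

lemma cont_mono (k : Fin n → ℕ) :
    Continuous fun ξ : EuclideanSpace ℝ (Fin n) => ((∏ i, (ξ i) ^ (k i) : ℝ) : ℂ) := by
  refine Complex.continuous_ofReal.comp ?_
  exact continuous_finset_prod _ fun i _ => ((EuclideanSpace.proj (𝕜 := ℝ) i).continuous).pow _

lemma mom_inner (ha : Integrable a volume) (hsupp : support a ⊆ Metric.closedBall c r)
    {s : ℕ}
    (hmom : ∀ α : Fin n → ℕ, (∑ i, α i) ≤ s →
      ∫ ξ : EuclideanSpace ℝ (Fin n), ((∏ i, (ξ i) ^ (α i) : ℝ) : ℂ) * a ξ = 0)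
    (x : EuclideanSpace ℝ (Fin n)) {j : ℕ} (hj : j ≤ s) :
    ∫ ξ : EuclideanSpace ℝ (Fin n), ((⟪ξ, x⟫ : ℝ) : ℂ) ^ j * a ξ = 0 := by
  have hexp : ∀ ξ : EuclideanSpace ℝ (Fin n),
      ((⟪ξ, x⟫ : ℝ) : ℂ) ^ j * a ξ
        = ∑ k ∈ Finset.piAntidiag Finset.univ j,
            ((Nat.multinomial Finset.univ k : ℂ) * ∏ i, ((x i : ℂ)) ^ (k i)) *
              (((∏ i, (ξ i) ^ (k i) : ℝ) : ℂ) * a ξ) := by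
    intro ξ
    have h1 : ((⟪ξ, x⟫ : ℝ) : ℂ) = ∑ i, (ξ i : ℂ) * (x i : ℂ) := by
      rw [show (⟪ξ, x⟫ : ℝ) = ∑ i, ξ i * x i from by
        rw [PiLp.inner_apply]
        exact Finset.sum_congr rfl fun i _ => by rw [RCLike.inner_apply, conj_trivial, mul_comm]]
      push_cast
      rfl
    rw [h1, Finset.sum_pow_eq_sum_piAntidiag, Finset.sum_mul]
    refine Finset.sum_congr rfl fun k _ => ?_
    push_cast
    simp_rw [mul_pow]
    rw [Finset.prod_mul_distrib]
    ring
  calc (∫ ξ : EuclideanSpace ℝ (Fin n), ((⟪ξ, x⟫ : ℝ) : ℂ) ^ j * a ξ)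
      = ∫ ξ : EuclideanSpace ℝ (Fin n), ∑ k ∈ Finset.piAntidiag Finset.univ j,
          ((Nat.multinomial Finset.univ k : ℂ) * ∏ i, ((x i : ℂ)) ^ (k i)) *
            (((∏ i, (ξ i) ^ (k i) : ℝ) : ℂ) * a ξ) := by
        exact integral_congr_ae (Filter.Eventually.of_forall hexp)
  _ = ∑ k ∈ Finset.piAntidiag Finset.univ j,
        ∫ ξ : EuclideanSpace ℝ (Fin n),
          ((Nat.multinomial Finset.univ k : ℂ) * ∏ i, ((x i : ℂ)) ^ (k i)) *
            (((∏ i, (ξ i) ^ (k i) : ℝ) : ℂ) * a ξ) := by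
        refine integral_finset_sum _ fun k _ => ?_
        exact ((mul_int ha hsupp (cont_mono k)).const_mul _)
  _ = 0 := by
        refine Finset.sum_eq_zero fun k hk => ?_
        rw [integral_const_mul, hmom k ?_, mul_zero]
        obtain ⟨hsum, -⟩ := Finset.mem_piAntidiag.mp hk
        exact le_trans hsum.le hj

lemma cont_inner (x : EuclideanSpace ℝ (Fin n)) :
    Continuous fun ξ : EuclideanSpace ℝ (Fin n) => (⟪ξ, x⟫ : ℝ) :=
  continuous_id.inner continuous_const

lemma mom_shift (ha : Integrable a volume) (hsupp : support a ⊆ Metric.closedBall c r)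
    {s : ℕ}
    (hmom : ∀ α : Fin n → ℕ, (∑ i, α i) ≤ s →
      ∫ ξ : EuclideanSpace ℝ (Fin n), ((∏ i, (ξ i) ^ (α i) : ℝ) : ℂ) * a ξ = 0)
    (x : EuclideanSpace ℝ (Fin n)) (b : ℝ) {k : ℕ} (hk : k ≤ s) :
    ∫ ξ : EuclideanSpace ℝ (Fin n), (((⟪ξ, x⟫ - b : ℝ)) : ℂ) ^ k * a ξ = 0 := by
  have hexp : ∀ ξ : EuclideanSpace ℝ (Fin n),
      (((⟪ξ, x⟫ - b : ℝ)) : ℂ) ^ k * a ξ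
        = ∑ j ∈ Finset.range (k+1),
            (((-b : ℝ) : ℂ) ^ (k - j) * (Nat.choose k j : ℂ)) *
              (((⟪ξ, x⟫ : ℝ) : ℂ) ^ j * a ξ) := by
    intro ξ
    have : (((⟪ξ, x⟫ - b : ℝ)) : ℂ) = ((⟪ξ, x⟫ : ℝ) : ℂ) + ((-b : ℝ) : ℂ) := by push_cast; ring
    rw [this, add_pow, Finset.sum_mul]
    exact Finset.sum_congr rfl fun j _ => by ring
  calc (∫ ξ : EuclideanSpace ℝ (Fin n), (((⟪ξ, x⟫ - b : ℝ)) : ℂ) ^ k * a ξ)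
      = ∫ ξ : EuclideanSpace ℝ (Fin n), ∑ j ∈ Finset.range (k+1),
          (((-b : ℝ) : ℂ) ^ (k - j) * (Nat.choose k j : ℂ)) *
            (((⟪ξ, x⟫ : ℝ) : ℂ) ^ j * a ξ) :=
        integral_congr_ae (Filter.Eventually.of_forall hexp)
  _ = ∑ j ∈ Finset.range (k+1), ∫ ξ : EuclideanSpace ℝ (Fin n),
        (((-b : ℝ) : ℂ) ^ (k - j) * (Nat.choose k j : ℂ)) *
          (((⟪ξ, x⟫ : ℝ) : ℂ) ^ j * a ξ) := by
        refine integral_finset_sum _ fun j _ => ?_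
        refine ((mul_int ha hsupp ?_).const_mul _)
        exact (Complex.continuous_ofReal.comp (cont_inner x)).pow j
  _ = 0 := by
        refine Finset.sum_eq_zero fun j hj => ?_
        rw [integral_const_mul, mom_inner ha hsupp hmom x ?_, mul_zero]
        have := Finset.mem_range.mp hj
        omega

lemma fourier_bound2 (hr : 0 ≤ r) (ha : Integrable a volume)
    (hsupp : support a ⊆ Metric.closedBall c r) {s : ℕ}
    (hmom : ∀ α : Fin n → ℕ, (∑ i, α i) ≤ s →
      ∫ ξ : EuclideanSpace ℝ (Fin n), ((∏ i, (ξ i) ^ (α i) : ℝ) : ℂ) * a ξ = 0)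
    (x : EuclideanSpace ℝ (Fin n)) :
    ‖𝓕 a x‖ ≤ (2 * π * r * ‖x‖) ^ (s+1) * ∫ ξ, ‖a ξ‖ := by
  set b : ℝ := ⟪c, x⟫ with hbdef
  set w : EuclideanSpace ℝ (Fin n) → ℝ := fun ξ => -2 * π * (⟪ξ, x⟫ - b) with hwdef
  set g : EuclideanSpace ℝ (Fin n) → ℂ := fun ξ =>
    Complex.exp ((w ξ : ℂ) * Complex.I)
      - ∑ k ∈ Finset.range (s+1), ((w ξ : ℂ) * Complex.I) ^ k / (Nat.factorial k) with hgdef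
  have hwcont : Continuous w := by
    apply Continuous.mul continuous_const
    exact (cont_inner x).sub continuous_const
  have hgcont : Continuous g := by
    refine Continuous.sub ?_ ?_
    · exact Complex.continuous_exp.comp ((Complex.continuous_ofReal.comp hwcont).mul continuous_const)
    · refine continuous_finset_sum _ fun k _ => ?_
      exact (((Complex.continuous_ofReal.comp hwcont).mul continuous_const).pow k).div_const _
  -- Step A : 𝓕 a x = exp(-2πb I) * ∫ g * a
  have stepA : 𝓕 a x = Complex.exp (((-2 * π * b : ℝ) : ℂ) * Complex.I) * ∫ ξ, g ξ * a ξ := by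
    rw [Real.fourier_eq']
    have h1 : ∀ ξ : EuclideanSpace ℝ (Fin n),
        Complex.exp (((-2 * π * ⟪ξ, x⟫ : ℝ) : ℂ) * Complex.I) • a ξ
          = Complex.exp (((-2 * π * b : ℝ) : ℂ) * Complex.I) *
              (Complex.exp ((w ξ : ℂ) * Complex.I) * a ξ) := by
      intro ξ
      rw [smul_eq_mul, ← mul_assoc, ← Complex.exp_add]
      congr 2
      simp only [hwdef]
      push_cast
      ring
    rw [integral_congr_ae (Filter.Eventually.of_forall h1), integral_const_mul]
    congr 1
    -- ∫ exp(w ξ I) * a = ∫ g * a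
    have h2 : ∀ ξ : EuclideanSpace ℝ (Fin n),
        Complex.exp ((w ξ : ℂ) * Complex.I) * a ξ
          = g ξ * a ξ + ∑ k ∈ Finset.range (s+1),
              (Complex.I ^ k * ((-2 * π : ℝ) : ℂ) ^ k / (Nat.factorial k)) *
                ((((⟪ξ, x⟫ - b : ℝ)) : ℂ) ^ k * a ξ) := by
      intro ξ
      have hwc : ((w ξ : ℝ) : ℂ) = ((-2 * π : ℝ) : ℂ) * (((⟪ξ, x⟫ - b : ℝ)) : ℂ) := by
        simp only [hwdef]; push_cast; ring
      have hterm : ∀ k ∈ Finset.range (s+1),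
          (Complex.I ^ k * ((-2 * π : ℝ) : ℂ) ^ k / (Nat.factorial k)) *
            ((((⟪ξ, x⟫ - b : ℝ)) : ℂ) ^ k * a ξ)
          = (((w ξ : ℂ) * Complex.I) ^ k / (Nat.factorial k)) * a ξ := by
        intro k _
        rw [hwc]; ring
      rw [Finset.sum_congr rfl hterm, hgdef]
      simp only
      rw [sub_mul, ← Finset.sum_mul]
      ring
    rw [integral_congr_ae (Filter.Eventually.of_forall h2)]
    rw [integral_add (mul_int ha hsupp hgcont) ?int2]
    case int2 =>
      refine integrable_finset_sum _ fun k _ => ?_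
      refine Integrable.const_mul ?_ _
      exact mul_int (F := fun ξ => (((⟪ξ, x⟫ - b : ℝ)) : ℂ) ^ k) ha hsupp
        ((Complex.continuous_ofReal.comp ((cont_inner x).sub continuous_const)).pow k)
    rw [integral_finset_sum _ fun k _ =>
      ((mul_int (F := fun ξ => (((⟪ξ, x⟫ - b : ℝ)) : ℂ) ^ k) ha hsupp
        ((Complex.continuous_ofReal.comp ((cont_inner x).sub continuous_const)).pow k)).const_mul _)]
    have h3 : ∀ k ∈ Finset.range (s+1),
        (∫ ξ, (Complex.I ^ k * ((-2 * π : ℝ) : ℂ) ^ k / (Nat.factorial k)) *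
          ((((⟪ξ, x⟫ - b : ℝ)) : ℂ) ^ k * a ξ)) = 0 := by
      intro k hk
      rw [integral_const_mul, mom_shift ha hsupp hmom x b (Nat.lt_succ_iff.mp (Finset.mem_range.mp hk)), mul_zero]
    rw [Finset.sum_congr rfl h3]
    simp
  -- Step B : norm bound
  rw [stepA, norm_mul]
  have habs : ‖Complex.exp (((-2 * π * b : ℝ) : ℂ) * Complex.I)‖ = 1 := by
    rw [Complex.norm_exp_ofReal_mul_I]
  rw [habs, one_mul]
  refine int_bound ha hsupp fun ξ hξ => ?_
  refine (exp_taylor_bound (s+1) (w ξ)).trans ?_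
  refine pow_le_pow_left₀ (abs_nonneg _) ?_ _
  have hw : w ξ = -2 * π * ⟪ξ - c, x⟫ := by
    rw [hwdef, inner_sub_left]
  rw [hw]
  have h1 : |(-2) * π * ⟪ξ - c, x⟫| ≤ 2 * π * (r * ‖x‖) := by
    rw [abs_mul]
    have h2 : |(-2:ℝ) * π| = 2 * π := by
      rw [abs_mul, abs_neg, _root_.abs_two, _root_.abs_of_nonneg pi_nonneg]
    rw [h2]
    refine mul_le_mul_of_nonneg_left ?_ (by positivity)
    refine (abs_real_inner_le_norm _ _).trans ?_
    refine mul_le_mul_of_nonneg_right ?_ (norm_nonneg x)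
    rw [← dist_eq_norm]
    exact Metric.mem_closedBall.mp hξ
  exact h1.trans_eq (by ring)

lemma l1_bound (p : EuclideanSpace ℝ (Fin n) → ℝ)
    (hpos : ∀ x, 0 < p x) (hp1 : ∀ x, p x ≤ 1) (h0 : 0 < essInf p volume)
    {q : ℝ≥0∞} (hq : 1 ≤ q)
    (ha : Integrable a volume)
    (hsupp : support a ⊆ Metric.closedBall c r)
    (hsize : eLpNorm a q volume ≤
      (volume (Metric.closedBall c r)) ^ (q⁻¹).toReal /
        luxNorm volume p ((Metric.closedBall c r).indicator fun _ => (1 : ℝ≥0∞)))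
    (hv0 : volume (Metric.closedBall c r) ≠ 0)
    (hvtop : volume (Metric.closedBall c r) ≠ ∞)
    (hμ : (volume : Measure (EuclideanSpace ℝ (Fin n))) ≠ 0) :
    ∫ ξ, ‖a ξ‖ ≤ (max ((volume (Metric.closedBall c r)) ^ (1 - (essInf p volume)⁻¹))
      ((volume (Metric.closedBall c r)) ^ (1 - (essSup p volume)⁻¹))).toReal := by
  set B := Metric.closedBall c r with hB
  set v := volume B with hv
  set Pm := essInf p (volume : Measure (EuclideanSpace ℝ (Fin n))) with hPm
  set Pp := essSup p (volume : Measure (EuclideanSpace ℝ (Fin n))) with hPp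
  set L := luxNorm volume p (B.indicator fun _ => (1 : ℝ≥0∞)) with hL
  set m : ℝ≥0∞ := min (v ^ Pm⁻¹) (v ^ Pp⁻¹) with hm
  have hmL : m ≤ L := lux_lower volume p hpos hp1 h0 hμ measurableSet_closedBall hv0 hvtop
  set A : ℝ := q.toReal⁻¹ with hA
  -- step 1 : eLpNorm 1 ≤ eLpNorm q * v ^ (1 - A)
  have hN1 : eLpNorm a 1 volume = eLpNorm a 1 (volume.restrict B) := by
    conv_lhs => rw [← Set.indicator_eq_self.2 hsupp]
    exact eLpNorm_indicator_eq_eLpNorm_restrict measurableSet_closedBall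
  have hholder : eLpNorm a 1 (volume.restrict B) ≤ eLpNorm a q (volume.restrict B) * v ^ (1 - A) := by
    have h := eLpNorm_le_eLpNorm_mul_rpow_measure_univ (p := 1) (q := q)
      (μ := volume.restrict B) hq (ha.aestronglyMeasurable.restrict (s := B))
    simpa [Measure.restrict_apply_univ, one_div] using h
  have hmono : eLpNorm a q (volume.restrict B) ≤ eLpNorm a q volume :=
    eLpNorm_mono_measure _ Measure.restrict_le_self
  have hqA : (q⁻¹).toReal = A := by rw [hA, ENNReal.toReal_inv]
  have hchain : eLpNorm a 1 volume ≤ (v ^ A / L) * v ^ (1 - A) := by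
    rw [hN1]
    refine hholder.trans ?_
    refine mul_le_mul_left ?_ _
    refine hmono.trans ?_
    rw [← hqA]
    exact hsize
  have hstep : (v ^ A / L) * v ^ (1 - A) ≤ v / m := by
    have h1 : (v ^ A / L) * v ^ (1 - A) ≤ (v ^ A / m) * v ^ (1 - A) :=
      mul_le_mul_left (ENNReal.div_le_div_left hmL _) _
    refine h1.trans ?_
    rw [div_eq_mul_inv, div_eq_mul_inv, mul_right_comm, ← ENNReal.rpow_add _ _ hv0 hvtop]
    rw [add_sub_cancel, ENNReal.rpow_one]
  have hdiv : ∀ e : ℝ, v / v ^ e = v ^ (1 - e) := fun e => by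
    rw [sub_eq_add_neg, ENNReal.rpow_add _ _ hv0 hvtop, ENNReal.rpow_one, ENNReal.rpow_neg,
      div_eq_mul_inv]
  have hmax : v / m ≤ max (v ^ (1 - Pm⁻¹)) (v ^ (1 - Pp⁻¹)) := by
    rcases min_cases (v ^ Pm⁻¹) (v ^ Pp⁻¹) with ⟨he, -⟩ | ⟨he, -⟩
    · rw [hm, he, hdiv]; exact le_max_left _ _
    · rw [hm, he, hdiv]; exact le_max_right _ _
  have hvfin : ∀ e : ℝ, v ^ e ≠ ∞ := fun e => by
    simp [ENNReal.rpow_eq_top_iff, hv0, hvtop]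
  have hfin : max (v ^ (1 - Pm⁻¹)) (v ^ (1 - Pp⁻¹)) ≠ ∞ :=
    (max_lt (hvfin _).lt_top (hvfin _).lt_top).ne
  have htot : eLpNorm a 1 volume ≤ max (v ^ (1 - Pm⁻¹)) (v ^ (1 - Pp⁻¹)) :=
    hchain.trans (hstep.trans hmax)
  have hint : ∫ ξ, ‖a ξ‖ = (eLpNorm a 1 volume).toReal := by
    rw [eLpNorm_one_eq_lintegral_enorm, ← ofReal_integral_norm_eq_lintegral_enorm ha,
      ENNReal.toReal_ofReal (integral_nonneg fun ξ => norm_nonneg _)]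
  rw [hint]
  exact ENNReal.toReal_mono hfin htot

end Aux

theorem atom_fourier_pointwise_bound {n : ℕ} (hn : 1 ≤ n)
    (p : EuclideanSpace ℝ (Fin n) → ℝ) (hp : Measurable p)
    (hpos : ∀ x, 0 < p x) (hp1 : ∀ x, p x ≤ 1)
    (h0 : 0 < essInf p volume)
    (q : ℝ≥0∞) (hq : 1 < q) (s : ℕ)
    (hs : (⌊(n : ℝ) * (1 / essInf p volume - 1)⌋ : ℤ) ≤ (s : ℤ)) :
    ∃ C > 0, ∀ (c : EuclideanSpace ℝ (Fin n)) (r : ℝ), 0 < r →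
      ∀ a : EuclideanSpace ℝ (Fin n) → ℂ, IsVarAtom p q s c r a →
      ∀ x : EuclideanSpace ℝ (Fin n),
        ‖𝓕 a x‖ ≤ C * max (‖x‖ ^ ((n : ℝ) * (1 / essInf p volume - 1)))
          (‖x‖ ^ ((n : ℝ) * (1 / essSup p volume - 1))) := by
  classical
  set Pm := essInf p (volume : Measure (EuclideanSpace ℝ (Fin n))) with hPmdef
  set Pp := essSup p (volume : Measure (EuclideanSpace ℝ (Fin n))) with hPpdef
  -- basic facts about the measure
  have hμ : (volume : Measure (EuclideanSpace ℝ (Fin n))) ≠ 0 := by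
    intro h
    have h1 : (0:ℝ≥0∞) < volume (Metric.ball (0 : EuclideanSpace ℝ (Fin n)) 1) := Metric.measure_ball_pos _ _ one_pos
    rw [h] at h1
    simp at h1
  have hne : ((ae (volume : Measure (EuclideanSpace ℝ (Fin n)))).NeBot) := ae_neBot.2 hμ
  have hbdd_above : IsBoundedUnder (· ≤ ·) (ae (volume : Measure (EuclideanSpace ℝ (Fin n)))) p :=
    Filter.isBoundedUnder_of ⟨1, hp1⟩
  have hbdd_below : IsBoundedUnder (· ≥ ·) (ae (volume : Measure (EuclideanSpace ℝ (Fin n)))) p :=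
    Filter.isBoundedUnder_of ⟨0, fun x => (hpos x).le⟩
  have hPmPp : Pm ≤ Pp := by
    obtain ⟨y, hy1, hy2⟩ := ((ae_essInf_le hbdd_below).and (ae_le_essSup hbdd_above)).exists
    exact hy1.trans hy2
  have hPp1 : Pp ≤ 1 :=
    limsup_le_of_le (hbdd_below.isCoboundedUnder_le) (Filter.Eventually.of_forall hp1)
  have hPp0 : 0 < Pp := lt_of_lt_of_le h0 hPmPp
  have hPm1 : Pm ≤ 1 := hPmPp.trans hPp1
  -- exponents
  set δ : ℝ := (n : ℝ) * (Pm⁻¹ - 1) with hδdef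
  set δ' : ℝ := (n : ℝ) * (Pp⁻¹ - 1) with hδ'def
  have hδ'0 : 0 ≤ δ' := by
    have h1 : 1 ≤ Pp⁻¹ := (one_le_inv₀ hPp0).mpr hPp1
    have : (0:ℝ) ≤ (n:ℝ) := Nat.cast_nonneg n
    nlinarith
  have hδ'δ : δ' ≤ δ := by
    have h1 : Pp⁻¹ ≤ Pm⁻¹ := by
      exact inv_anti₀ h0 hPmPp
    have : (0:ℝ) ≤ (n:ℝ) := Nat.cast_nonneg n
    nlinarith
  have hδ0 : 0 ≤ δ := hδ'0.trans hδ'δ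
  have hδs : δ ≤ (s:ℝ) + 1 := by
    have h1 : δ < (⌊δ⌋ : ℝ) + 1 := by
      have : δ = (n : ℝ) * (1 / Pm - 1) := by rw [hδdef, one_div]
      rw [this]
      exact_mod_cast Int.lt_floor_add_one ((n : ℝ) * (1 / Pm - 1))
    have h2 : ((⌊(n : ℝ) * (1 / Pm - 1)⌋ : ℤ) : ℝ) ≤ (s : ℝ) := by exact_mod_cast hs
    rw [hδdef, one_div] at *
    linarith [h1, h2]
  have hδ's : δ' ≤ (s:ℝ) + 1 := hδ'δ.trans hδs
  -- constants
  set κ : ℝ≥0∞ := volume (Metric.closedBall (0 : EuclideanSpace ℝ (Fin n)) 1) with hκdef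
  have hκ0 : κ ≠ 0 := by
    refine (lt_of_lt_of_le (Metric.measure_ball_pos _ _ one_pos) (measure_mono Metric.ball_subset_closedBall)).ne'
  have hκtop : κ ≠ ∞ := measure_closedBall_lt_top.ne
  set κR : ℝ := κ.toReal with hκRdef
  have hκR0 : 0 < κR := ENNReal.toReal_pos hκ0 hκtop
  set K : ℝ := max (κR ^ (1 - Pm⁻¹)) (κR ^ (1 - Pp⁻¹)) with hKdef
  have hK0 : 0 < K := lt_max_of_lt_left (Real.rpow_pos_of_pos hκR0 _)
  set c₂ : ℝ := (2 * π) ^ (s + 1) with hc2def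
  have hc20 : 0 < c₂ := by positivity
  refine ⟨(1 + c₂) * K, by positivity, ?_⟩
  intro c r hr a hatom x
  obtain ⟨hmem, hsupp, hsize, hmom⟩ := hatom
  -- volume of the ball
  set v : ℝ≥0∞ := volume (Metric.closedBall c r) with hvdef
  have hv0 : v ≠ 0 :=
    (lt_of_lt_of_le (Metric.measure_ball_pos _ _ hr) (measure_mono Metric.ball_subset_closedBall)).ne'
  have hvtop : v ≠ ∞ := measure_closedBall_lt_top.ne
  have hvr : v.toReal = r ^ n * κR := by
    rw [hvdef, Measure.addHaar_closedBall' _ _ hr.le, ENNReal.toReal_mul,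
      ENNReal.toReal_ofReal (pow_nonneg hr.le _), finrank_euclideanSpace_fin]
  -- integrability
  have ha : Integrable a volume := by
    refine memLp_one_iff_integrable.mp
      (hmem.mono_exponent_of_measure_support_ne_top
        (fun y hy => notMem_support.1 (fun h => hy (hsupp h))) hvtop hq.le)
  set M₁ : ℝ := ∫ ξ, ‖a ξ‖ with hM1def
  have hM10 : 0 ≤ M₁ := integral_nonneg fun ξ => norm_nonneg _
  have hb1 : ‖𝓕 a x‖ ≤ M₁ :=
    VectorFourier.norm_fourierIntegral_le_integral_norm _ _ _ _ _
  have hb2 : ‖𝓕 a x‖ ≤ (2 * π * r * ‖x‖) ^ (s+1) * M₁ :=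
    fourier_bound2 hr.le ha hsupp hmom x
  -- the L¹ bound in terms of powers of r
  have hM1b : M₁ ≤ K * max (r ^ (-δ)) (r ^ (-δ')) := by
    have h1 := l1_bound p hpos hp1 h0 hq.le ha hsupp hsize hv0 hvtop hμ
    have hvfin : ∀ e : ℝ, v ^ e ≠ ∞ := fun e => by
      simp [ENNReal.rpow_eq_top_iff, hv0, hvtop]
    rw [ENNReal.toReal_max (hvfin _) (hvfin _)] at h1
    have h2 : ∀ e : ℝ, (v ^ (1 - e)).toReal = r ^ (-((n:ℝ) * (e - 1))) * κR ^ (1 - e) := by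
      intro e
      rw [← ENNReal.toReal_rpow, hvr, Real.mul_rpow (pow_nonneg hr.le _) hκR0.le,
        ← Real.rpow_natCast r n, ← Real.rpow_mul hr.le]
      congr 2
      ring
    rw [h2, h2] at h1
    have e1 : -((n:ℝ) * (Pm⁻¹ - 1)) = -δ := by rw [hδdef]
    have e2 : -((n:ℝ) * (Pp⁻¹ - 1)) = -δ' := by rw [hδ'def]
    rw [e1, e2] at h1
    refine h1.trans (max_le ?_ ?_)
    · calc r ^ (-δ) * κR ^ (1 - Pm⁻¹)
          ≤ max (r ^ (-δ)) (r ^ (-δ')) * K :=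
            mul_le_mul (le_max_left _ _) (le_max_left _ _) (Real.rpow_nonneg hκR0.le _)
              (le_max_of_le_left (Real.rpow_nonneg hr.le _))
      _ = K * max (r ^ (-δ)) (r ^ (-δ')) := mul_comm _ _
    · calc r ^ (-δ') * κR ^ (1 - Pp⁻¹)
          ≤ max (r ^ (-δ)) (r ^ (-δ')) * K :=
            mul_le_mul (le_max_right _ _) (le_max_right _ _) (Real.rpow_nonneg hκR0.le _)
              (le_max_of_le_left (Real.rpow_nonneg hr.le _))
      _ = K * max (r ^ (-δ)) (r ^ (-δ')) := mul_comm _ _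
  -- final case analysis
  have hgoal : (n:ℝ) * (1/Pm - 1) = δ := by rw [hδdef, one_div]
  have hgoal' : (n:ℝ) * (1/Pp - 1) = δ' := by rw [hδ'def, one_div]
  rw [hgoal, hgoal']
  set T : ℝ := max (‖x‖ ^ δ) (‖x‖ ^ δ') with hTdef
  have hT0 : 0 ≤ T := le_max_of_le_left (Real.rpow_nonneg (norm_nonneg x) _)
  by_cases hx : x = 0
  · subst hx
    have h1 : ‖𝓕 a 0‖ ≤ 0 := by
      have := hb2
      rw [norm_zero, mul_zero, zero_pow (Nat.succ_ne_zero s), zero_mul] at this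
      exact this
    have h2 : 0 ≤ (1 + c₂) * K * T := by positivity
    linarith
  · have hx0 : 0 < ‖x‖ := norm_pos_iff.2 hx
    rcases le_total (r * ‖x‖) 1 with hsmall | hbig
    · -- small |x| r
      have hrb : r ≤ ‖x‖⁻¹ := by
        rw [← one_div, le_div_iff₀ hx0]
        exact hsmall
      have key2 : ∀ e : ℝ, 0 ≤ e → e ≤ (s:ℝ)+1 → (r * ‖x‖) ^ (s+1) * r ^ (-e) ≤ ‖x‖ ^ e := by
        intro e he hes
        have hσ : ((s+1 : ℕ) : ℝ) = (s:ℝ)+1 := by push_cast; ring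
        rw [← Real.rpow_natCast (r * ‖x‖) (s+1), hσ, Real.mul_rpow hr.le (norm_nonneg x)]
        calc r ^ ((s:ℝ)+1) * ‖x‖ ^ ((s:ℝ)+1) * r ^ (-e)
            = r ^ (((s:ℝ)+1) - e) * ‖x‖ ^ ((s:ℝ)+1) := by
              rw [mul_right_comm, ← Real.rpow_add hr, sub_eq_add_neg]
        _ ≤ (‖x‖⁻¹) ^ (((s:ℝ)+1) - e) * ‖x‖ ^ ((s:ℝ)+1) := by
              refine mul_le_mul_of_nonneg_right ?_ (Real.rpow_nonneg (norm_nonneg x) _)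
              exact Real.rpow_le_rpow hr.le hrb (by linarith)
        _ = ‖x‖ ^ e := by
              rw [Real.inv_rpow (norm_nonneg x), ← Real.rpow_neg (norm_nonneg x),
                ← Real.rpow_add hx0]
              congr 1
              ring
      calc ‖𝓕 a x‖ ≤ (2*π*r*‖x‖)^(s+1) * M₁ := hb2
      _ = c₂ * ((r*‖x‖)^(s+1) * M₁) := by
            rw [hc2def, show (2*π*r*‖x‖) = (2*π)*(r*‖x‖) by ring, mul_pow]
            ring
      _ ≤ c₂ * ((r*‖x‖)^(s+1) * (K * max (r^(-δ)) (r^(-δ')))) := by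
            refine mul_le_mul_of_nonneg_left ?_ hc20.le
            exact mul_le_mul_of_nonneg_left hM1b (by positivity)
      _ = c₂ * K * ((r*‖x‖)^(s+1) * max (r^(-δ)) (r^(-δ'))) := by ring
      _ ≤ c₂ * K * T := by
            refine mul_le_mul_of_nonneg_left ?_ (by positivity)
            rw [mul_max_of_nonneg _ _ (by positivity : (0:ℝ) ≤ (r*‖x‖)^(s+1))]
            exact max_le_max (key2 δ hδ0 hδs) (key2 δ' hδ'0 hδ's)
      _ ≤ (1 + c₂) * K * T :=
            mul_le_mul_of_nonneg_right
              (mul_le_mul_of_nonneg_right (by linarith : c₂ ≤ 1 + c₂) hK0.le) hT0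
    · -- big |x| r
      have hra : r⁻¹ ≤ ‖x‖ := by
        rw [← one_div, div_le_iff₀ hr]
        linarith [mul_comm r ‖x‖, hbig]
      have key1 : ∀ e : ℝ, 0 ≤ e → r ^ (-e) ≤ ‖x‖ ^ e := by
        intro e he
        rw [Real.rpow_neg hr.le, ← Real.inv_rpow hr.le]
        exact Real.rpow_le_rpow (inv_nonneg.2 hr.le) hra he
      calc ‖𝓕 a x‖ ≤ M₁ := hb1
      _ ≤ K * max (r^(-δ)) (r^(-δ')) := hM1b
      _ ≤ K * T := mul_le_mul_of_nonneg_left (max_le_max (key1 δ hδ0) (key1 δ' hδ'0)) hK0.le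
      _ ≤ (1+c₂)*K*T :=
            mul_le_mul_of_nonneg_right (le_mul_of_one_le_left hK0.le (by linarith)) hT0
end
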